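/- Let s, t be real numbers and let v : ℝ → ℝ be twice differentiable with v(x) ≠ 0 for all x, satisfying both (v′(x))² = −(v(x)² − 4s²)(v(x)² − 4t²) and v″(x) = −2·v(x)³ + 4(s² + t²)·v(x) for all x ∈ ℝ. Then the function u₀ := v′/v is twice differentiable and satisfies −u₀″(x) − (2·v(x)² + 32·s²t²/v(x)²)·u₀(x) = 0 for all x ∈ ℝ. -/

import Mathlib

/-- If `v` is a nowhere-vanishing twice differentiable solution of
`(v′)² = −(v² − 4s²)(v² − 4t²)` and `v″ = −2v³ + 4(s² + t²)v`, then
`u₀ = v′/v` is twice differentiable and is a zero eigenfunction of the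
rotational Jacobi operator `L̂₀ = −∂ₓ∂ₓ − 2v² − 32s²t²v⁻²`. -/
theorem jacobi_field_u0 (s t : ℝ) (v : ℝ → ℝ)
    (hv : ∀ x, DifferentiableAt ℝ v x)
    (hv' : ∀ x, DifferentiableAt ℝ (deriv v) x)
    (hvne : ∀ x, v x ≠ 0)
    (hode1 : ∀ x, (deriv v x) ^ 2 = -((v x ^ 2 - 4 * s ^ 2) * (v x ^ 2 - 4 * t ^ 2)))
    (hode2 : ∀ x, deriv (deriv v) x = -2 * v x ^ 3 + 4 * (s ^ 2 + t ^ 2) * v x) :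
    (∀ x, DifferentiableAt ℝ (fun x' => deriv v x' / v x') x) ∧
    (∀ x, DifferentiableAt ℝ (deriv fun x' => deriv v x' / v x') x) ∧
    (∀ x, -(deriv (deriv fun x' => deriv v x' / v x') x)
        - (2 * v x ^ 2 + 32 * s ^ 2 * t ^ 2 / v x ^ 2) * (deriv v x / v x) = 0) := by
  have hu : ∀ x, DifferentiableAt ℝ (fun x' => deriv v x' / v x') x :=
    fun x => (hv' x).div (hv x) (hvne x)
  have hderiv : (deriv fun x' => deriv v x' / v x')
      = fun x => -(v x) ^ 2 + 16 * s ^ 2 * t ^ 2 / v x ^ 2 := by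
    funext x
    have h1 := hode1 x
    have h2 := hode2 x
    rw [show (fun x' => deriv v x' / v x') = deriv v / v from rfl, deriv_div (hv' x) (hv x) (hvne x), h2]
    have hne := hvne x
    field_simp
    nlinarith [h1, sq_nonneg (v x)]
  have hd2 : ∀ x, HasDerivAt (fun x' => -(v x') ^ 2 + 16 * s ^ 2 * t ^ 2 / v x' ^ 2)
      (-(2 * v x ^ 1 * deriv v x) +
        (0 * v x ^ 2 - 16 * s ^ 2 * t ^ 2 * (2 * v x ^ 1 * deriv v x)) / (v x ^ 2) ^ 2) x := by
    intro x
    have hp : HasDerivAt (fun x' => v x' ^ 2) ((2 : ℕ) * v x ^ 1 * deriv v x) x :=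
      (hv x).hasDerivAt.pow 2
    have hc : HasDerivAt (fun _ : ℝ => (16 * s ^ 2 * t ^ 2 : ℝ)) 0 x := hasDerivAt_const _ _
    have := hp.neg.add (hc.div hp (pow_ne_zero 2 (hvne x)))
    exact this.congr_deriv (by rw [Nat.cast_ofNat])
  refine ⟨hu, fun x => ?_, fun x => ?_⟩
  · rw [hderiv]
    exact (hd2 x).differentiableAt
  · rw [hderiv, (hd2 x).deriv]
    have hne := hvne x
    field_simp
    ring
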